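/- Let X be a separable real Banach space, r > 0, δ > 0, and let s, t be reals with 0 < s < min{δ, t}. Let x₀*, y₀* ∈ X* with ‖x₀*‖ = ‖y₀*‖ = r, put a = r + s and ε = 2δ/a, and assume: (i) there is a sequence (v_n*) in X* converging to 0 in the weak* topology with ‖v_n*‖ > δ for all n and ‖x₀* ± v_n*‖ ≤ a for all n and both signs; and (ii) for every sequence (u_n*) in X* converging to 0 in the weak* topology with ‖u_n*‖ > δ for all n, there exists m with ‖y₀* + u_m*‖ ≥ r + t. Then ε ∈ (0,2), x₀*/a ∈ s_ε B_{X*}, and y₀*/a ∉ s_ε B_{X*}. -/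

import Mathlib

open Filter Topology Metric

/-- The ε-Szlenk derivation of the closed dual unit ball of `X`. -/
def szlenkDeriv (X : Type*) [NormedAddCommGroup X] [NormedSpace ℝ X] (ε : ℝ) :
    Set (StrongDual ℝ X) :=
  {x : StrongDual ℝ X | ‖x‖ ≤ 1 ∧
    ∀ V : Set (StrongDual ℝ X),
      IsOpen ((StrongDual.toWeakDual '' V : Set (WeakDual ℝ X))) → x ∈ V →
        ε < Metric.diam (Metric.closedBall (0 : StrongDual ℝ X) 1 ∩ V)}

/-- A sequence in the dual is weak*-null if it tends to `0` in the weak* topology. -/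
def WeakStarNull {X : Type*} [NormedAddCommGroup X] [NormedSpace ℝ X]
    (u : ℕ → StrongDual ℝ X) : Prop :=
  Filter.Tendsto (fun n => StrongDual.toWeakDual (u n)) Filter.atTop
    (nhds (0 : WeakDual ℝ X))


set_option maxHeartbeats 1000000 in
theorem szlenkDeriv_mem_and_not_mem_of_test (X : Type*) [NormedAddCommGroup X]
    [NormedSpace ℝ X] [CompleteSpace X] [TopologicalSpace.SeparableSpace X]
    (r δ s t : ℝ) (hr : 0 < r) (hδ : 0 < δ)
    (hs : 0 < s) (hst : s < min δ t)
    (x₀ y₀ : StrongDual ℝ X) (hx₀ : ‖x₀‖ = r) (hy₀ : ‖y₀‖ = r)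
    (a : ℝ) (ha : a = r + s) (ε : ℝ) (hε : ε = 2 * δ / a)
    (hi : ∃ v : ℕ → StrongDual ℝ X, WeakStarNull v ∧
      (∀ n, δ < ‖v n‖) ∧ (∀ n, ‖x₀ + v n‖ ≤ a) ∧ (∀ n, ‖x₀ - v n‖ ≤ a))
    (hii : ∀ u : ℕ → StrongDual ℝ X, WeakStarNull u →
      (∀ n, δ < ‖u n‖) → ∃ m, r + t ≤ ‖y₀ + u m‖) :
    ε ∈ Set.Ioo (0 : ℝ) 2 ∧
      (1 / a) • x₀ ∈ szlenkDeriv X ε ∧ (1 / a) • y₀ ∉ szlenkDeriv X ε := by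
  obtain ⟨v, hvnull, hvδ, hvp, hvm⟩ := hi
  have ha0 : 0 < a := by rw [ha]; positivity
  have hδa : δ < a := by
    have h3 : (2:ℝ) • v 0 = (x₀ + v 0) - (x₀ - v 0) := by rw [two_smul]; abel
    have hkey : 2 * ‖v 0‖ ≤ 2 * a := by
      calc 2 * ‖v 0‖ = ‖(2:ℝ) • v 0‖ := by rw [norm_smul]; simp
        _ = ‖(x₀ + v 0) - (x₀ - v 0)‖ := by rw [h3]
        _ ≤ ‖x₀ + v 0‖ + ‖x₀ - v 0‖ := norm_sub_le _ _
        _ ≤ 2 * a := by linarith [hvp 0, hvm 0]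
    linarith [hvδ 0]
  have hε0 : 0 < ε := by rw [hε]; positivity
  have hε2 : ε < 2 := by rw [hε, div_lt_iff₀ ha0]; linarith
  have hv0 : ∀ w : X, Tendsto (fun n => v n w) atTop (𝓝 0) := by
    intro w
    have := tendsto_iff_forall_eval_tendsto_topDualPairing.mp hvnull w
    exact this
  refine ⟨⟨hε0, hε2⟩, ⟨?_, ?_⟩, ?_⟩
  · rw [norm_smul, hx₀, Real.norm_eq_abs, abs_of_pos (by positivity : (0:ℝ) < 1/a),
      div_mul_eq_mul_div, one_mul, div_le_one ha0]
    linarith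
  · -- x₀/a is in the derived set
    intro V hV hxV
    set p : ℕ → StrongDual ℝ X := fun n => (1/a) • (x₀ + v n) with hp
    set q : ℕ → StrongDual ℝ X := fun n => (1/a) • (x₀ - v n) with hq
    have hmemV : ∀ (z : ℕ → StrongDual ℝ X),
        Tendsto (fun n => StrongDual.toWeakDual (z n)) atTop
          (𝓝 (StrongDual.toWeakDual ((1/a) • x₀))) → ∀ᶠ n in atTop, z n ∈ V := by
      intro z hz
      have hmem : StrongDual.toWeakDual ((1/a) • x₀) ∈
          StrongDual.toWeakDual '' V := Set.mem_image_of_mem _ hxV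
      filter_upwards [hz (hV.mem_nhds hmem)] with n hn
      obtain ⟨w, hwV, hw⟩ := hn
      have hwz : w = z n := by rwa [StrongDual.toWeakDual_inj] at hw
      exact hwz ▸ hwV
    have hptend : Tendsto (fun n => StrongDual.toWeakDual (p n)) atTop
        (𝓝 (StrongDual.toWeakDual ((1/a) • x₀))) := by
      rw [tendsto_iff_forall_eval_tendsto_topDualPairing]
      intro w
      have h1 : Tendsto (fun n => (1/a) * (x₀ w + v n w)) atTop
          (𝓝 ((1/a) * (x₀ w + 0))) :=
        (tendsto_const_nhds.add (hv0 w)).const_mul (1/a)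
      change Tendsto (fun n => (p n) w) atTop (𝓝 (((1/a) • x₀) w))
      simpa [hp, mul_add] using h1
    have hqtend : Tendsto (fun n => StrongDual.toWeakDual (q n)) atTop
        (𝓝 (StrongDual.toWeakDual ((1/a) • x₀))) := by
      rw [tendsto_iff_forall_eval_tendsto_topDualPairing]
      intro w
      have h1 : Tendsto (fun n => (1/a) * (x₀ w - v n w)) atTop
          (𝓝 ((1/a) * (x₀ w - 0))) :=
        (tendsto_const_nhds.sub (hv0 w)).const_mul (1/a)
      change Tendsto (fun n => (q n) w) atTop (𝓝 (((1/a) • x₀) w))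
      simpa [hq, mul_sub] using h1
    obtain ⟨n, hpn, hqn⟩ := ((hmemV p hptend).and (hmemV q hqtend)).exists
    have hball : ∀ (z : StrongDual ℝ X), ‖z‖ ≤ a →
        (1/a) • z ∈ Metric.closedBall (0 : StrongDual ℝ X) 1 := by
      intro z hz
      rw [Metric.mem_closedBall, dist_zero_right, norm_smul, Real.norm_eq_abs,
        abs_of_pos (by positivity : (0:ℝ) < 1/a)]
      rw [div_mul_eq_mul_div, one_mul, div_le_one ha0]; exact hz
    have hpnb := hball _ (hvp n)
    have hqnb := hball _ (hvm n)
    have hbdd : Bornology.IsBounded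
        (Metric.closedBall (0 : StrongDual ℝ X) 1 ∩ V) :=
      Metric.isBounded_closedBall.subset Set.inter_subset_left
    have hdist : ε < dist (p n) (q n) := by
      have hpq : p n - q n = (2/a) • v n := by
        have h0 : p n - q n = (1/a) • ((x₀ + v n) - (x₀ - v n)) := by
          rw [hp, hq, smul_sub]
        rw [h0, show (x₀ + v n) - (x₀ - v n) = (2:ℝ) • v n from by
            rw [two_smul]; abel,
          smul_smul, show (1/a) * 2 = 2/a from by ring]
      rw [dist_eq_norm, hpq, norm_smul, Real.norm_eq_abs,
        abs_of_pos (by positivity : (0:ℝ) < 2/a), hε]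
      rw [div_mul_eq_mul_div, div_lt_div_iff₀ ha0 ha0]
      have := hvδ n
      nlinarith
    calc ε < dist (p n) (q n) := hdist
      _ ≤ _ := Metric.dist_le_diam_of_mem hbdd ⟨hpnb, hpn⟩ ⟨hqnb, hqn⟩
  · -- y₀/a is not in the derived set
    intro hy
    obtain ⟨hynorm, hmain⟩ := hy
    set y : StrongDual ℝ X := (1/a) • y₀ with hydef
    obtain ⟨e, he⟩ := TopologicalSpace.exists_dense_seq X
    set W : ℕ → Set (WeakDual ℝ X) := fun k =>
      {z : WeakDual ℝ X | ∀ i ∈ Finset.range (k+1),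
        |z (e i) - y (e i)| < 1/(k+1)} with hW
    have hWopen : ∀ k, IsOpen (W k) := by
      intro k
      have : W k = ⋂ i ∈ Finset.range (k+1),
          {z : WeakDual ℝ X | |z (e i) - y (e i)| < 1/(k+1)} := by
        ext z; simp [hW]
      rw [this]
      exact isOpen_biInter_finset fun i _ =>
        isOpen_lt (((WeakDual.eval_continuous (e i)).sub continuous_const).abs)
          continuous_const
    have hsel : ∀ k : ℕ, ∃ z : StrongDual ℝ X, ‖z‖ ≤ 1 ∧
        (∀ i ∈ Finset.range (k+1), |z (e i) - y (e i)| < 1/(k+1)) ∧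
        δ/a < ‖z - y‖ := by
      intro k
      have himg : StrongDual.toWeakDual ''
          (StrongDual.toWeakDual ⁻¹' W k) = W k :=
        Set.image_preimage_eq _ (StrongDual.toWeakDual.surjective)
      have hyW : y ∈ StrongDual.toWeakDual ⁻¹' W k := by
        intro i _
        simpa using (by positivity : (0:ℝ) < 1/(k+1))
      have hdiam := hmain _ (by rw [himg]; exact hWopen k) hyW
      set S := Metric.closedBall (0 : StrongDual ℝ X) 1 ∩
        StrongDual.toWeakDual ⁻¹' W k with hS
      have hex : ∃ p ∈ S, ∃ q ∈ S, ε < dist p q := by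
        by_contra hcon
        push_neg at hcon
        exact absurd (Metric.diam_le_of_forall_dist_le hε0.le hcon)
          (not_le.mpr hdiam)
      obtain ⟨p, hpS, q, hqS, hpq⟩ := hex
      have h2 : dist p q ≤ dist p y + dist q y := by
        rw [dist_comm q y]; exact dist_triangle p y q
      have hor : δ/a < dist p y ∨ δ/a < dist q y := by
        by_contra hcon
        push_neg at hcon
        rw [hε] at hpq
        have : 2 * δ / a = δ/a + δ/a := by ring
        linarith [hcon.1, hcon.2]
      rcases hor with h | h
      · exact ⟨p, by simpa [dist_zero_right] using
          Metric.mem_closedBall.mp hpS.1, hpS.2, by rwa [dist_eq_norm] at h⟩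
      · exact ⟨q, by simpa [dist_zero_right] using
          Metric.mem_closedBall.mp hqS.1, hqS.2, by rwa [dist_eq_norm] at h⟩
    choose g hg1 hg2 hg3 using hsel
    have hay : a • y = y₀ := by
      rw [hydef, smul_smul]
      rw [show a * (1/a) = 1 by field_simp]
      rw [one_smul]
    set u : ℕ → StrongDual ℝ X := fun k => a • g k - y₀ with hu
    have hua : ∀ k, u k = a • (g k - y) := by
      intro k; rw [hu, smul_sub, hay]
    have huδ : ∀ k, δ < ‖u k‖ := by
      intro k
      rw [hua, norm_smul, Real.norm_eq_abs, abs_of_pos ha0]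
      have := hg3 k
      calc δ = a * (δ/a) := by field_simp
        _ < a * ‖g k - y‖ := by exact (mul_lt_mul_iff_right₀ ha0).mpr this
    have hgy : ∀ w : X, Tendsto (fun k => g k w - y w) atTop (𝓝 0) := by
      intro w
      rw [Metric.tendsto_atTop]
      intro η hη
      obtain ⟨i, hi⟩ := he.exists_dist_lt w (by positivity : (0:ℝ) < η/3)
      obtain ⟨N, hN⟩ := exists_nat_one_div_lt (by positivity : (0:ℝ) < η/3)
      refine ⟨max i N, fun k hk => ?_⟩
      have hik : i ≤ k := le_trans (le_max_left _ _) hk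
      have hNk : N ≤ k := le_trans (le_max_right _ _) hk
      have hwi : ‖w - e i‖ < η/3 := by rwa [dist_eq_norm] at hi
      have h1 : |g k w - g k (e i)| ≤ η/3 := by
        rw [← map_sub]
        calc |g k (w - e i)| = ‖g k (w - e i)‖ := (Real.norm_eq_abs _).symm
          _ ≤ ‖g k‖ * ‖w - e i‖ := (g k).le_opNorm _
          _ ≤ 1 * (η/3) := by
              apply mul_le_mul (hg1 k) hwi.le (norm_nonneg _) zero_le_one
          _ = η/3 := one_mul _
      have h2 : |g k (e i) - y (e i)| < η/3 := by
        have := hg2 k i (Finset.mem_range.mpr (Nat.lt_succ_of_le hik))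
        have hkN : (1:ℝ)/(k+1) ≤ 1/(N+1) := by
          apply one_div_le_one_div_of_le (by positivity)
          exact_mod_cast Nat.succ_le_succ hNk
        linarith
      have h3 : |y (e i) - y w| ≤ η/3 := by
        rw [← map_sub]
        calc |y (e i - w)| = ‖y (e i - w)‖ := (Real.norm_eq_abs _).symm
          _ ≤ ‖y‖ * ‖e i - w‖ := y.le_opNorm _
          _ ≤ 1 * (η/3) := by
              apply mul_le_mul hynorm _ (norm_nonneg _) zero_le_one
              rw [norm_sub_rev]; exact hwi.le
          _ = η/3 := one_mul _
      rw [Real.dist_eq, sub_zero]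
      calc |g k w - y w| ≤ |g k w - g k (e i)| + |g k (e i) - y w| :=
            abs_sub_le _ _ _
        _ ≤ |g k w - g k (e i)| + (|g k (e i) - y (e i)| + |y (e i) - y w|) := by
            linarith [abs_sub_le (g k (e i)) (y (e i)) (y w)]
        _ < η := by linarith
    have hunull : WeakStarNull u := by
      rw [WeakStarNull, tendsto_iff_forall_eval_tendsto_topDualPairing]
      intro w
      have h1 : Tendsto (fun k => a * (g k w - y w)) atTop (𝓝 (a * 0)) :=
        (hgy w).const_mul a
      have heq : ∀ k, a * (g k w - y w) = u k w := by
        intro k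
        rw [hua k]
        simp [smul_sub]
        ring
      change Tendsto (fun k => u k w) atTop (𝓝 ((0 : StrongDual ℝ X) w))
      simpa [heq] using h1
    obtain ⟨m, hm⟩ := hii u hunull huδ
    have hyum : y₀ + u m = a • g m := by simp only [hu]; abel
    rw [hyum, norm_smul, Real.norm_eq_abs, abs_of_pos ha0] at hm
    have : a * ‖g m‖ ≤ a := by
      calc a * ‖g m‖ ≤ a * 1 := (mul_le_mul_iff_right₀ ha0).mpr (hg1 m)
        _ = a := mul_one a
    have hst' : s < t := lt_of_lt_of_le hst (min_le_right _ _)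
    linarith
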